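/- Let U(p) = r(p)/(P_C + p) with r(p) = c·log₂(1 + g·p/(σ² + I)). If p* satisfies (P_C + p*)·r'(p*) = r(p*), then U is strictly increasing on [0, p*] and strictly decreasing on [p*, ∞); in particular p* is the unique global maximizer of U over [0, ∞). -/

import Mathlib

theorem stmt_9 (c g σ2 I P_C : ℝ) (hc : 0 < c) (hg : 0 < g) (hσ : 0 < σ2) (hI : 0 ≤ I)
    (hPC : 0 < P_C)
    (r : ℝ → ℝ) (hr : ∀ p, r p = c * Real.logb 2 (1 + g * p / (σ2 + I)))
    (U : ℝ → ℝ) (hU : ∀ p, U p = r p / (P_C + p))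
    (pstar : ℝ) (hp : 0 < pstar)
    (heq : (P_C + pstar) * deriv r pstar = r pstar) :
    StrictMonoOn U (Set.Icc 0 pstar) ∧ StrictAntiOn U (Set.Ici pstar) ∧
    ∀ p ∈ Set.Ici (0:ℝ), p ≠ pstar → U p < U pstar := by
  have hσI : 0 < σ2 + I := by linarith
  set a := g / (σ2 + I) with ha
  have hapos : 0 < a := div_pos hg hσI
  set k := c / Real.log 2 with hk
  have hkpos : 0 < k := div_pos hc (Real.log_pos one_lt_two)
  have hr' : r = fun p => k * Real.log (1 + a * p) := by
    funext p
    have harg : 1 + g * p / (σ2 + I) = 1 + a * p := by rw [ha]; ring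
    rw [hr, harg, Real.logb, hk]; ring
  have hU' : U = fun p => r p / (P_C + p) := funext hU
  have hden : ∀ p : ℝ, 0 ≤ p → 0 < 1 + a * p := by
    intro p hp0; nlinarith
  have hdenP : ∀ p : ℝ, 0 ≤ p → 0 < P_C + p := by intro p hp0; linarith
  -- derivative of r
  have hlin : ∀ p : ℝ, HasDerivAt (fun q : ℝ => 1 + a * q) a p := by
    intro p
    simpa using ((hasDerivAt_id p).const_mul a).const_add 1
  have hrd : ∀ p : ℝ, 0 ≤ p → HasDerivAt r (k * a / (1 + a * p)) p := by
    intro p hp0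
    rw [hr']
    have h2 := (Real.hasDerivAt_log (hden p hp0).ne').comp p (hlin p)
    have h3 := h2.const_mul k
    refine h3.congr_deriv ?_
    ring
  set F : ℝ → ℝ := fun p => k * a / (1 + a * p) * (P_C + p) - r p with hF
  have hUd : ∀ p : ℝ, 0 ≤ p → HasDerivAt U (F p / (P_C + p) ^ 2) p := by
    intro p hp0
    rw [hU']
    have hd : HasDerivAt (fun q : ℝ => P_C + q) 1 p := by
      simpa using (hasDerivAt_id p).const_add P_C
    have := (hrd p hp0).div hd (hdenP p hp0).ne'
    refine this.congr_deriv ?_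
    rw [hF]; ring
  -- F pstar = 0
  have hrdval : deriv r pstar = k * a / (1 + a * pstar) := (hrd pstar hp.le).deriv
  have hFstar : F pstar = 0 := by
    rw [hF]
    simp only
    rw [← hrdval]
    linarith [heq, mul_comm (P_C + pstar) (deriv r pstar)]
  -- derivative of F
  have hFd : ∀ p : ℝ, 0 ≤ p → HasDerivAt F (-(k * a ^ 2 * (P_C + p)) / (1 + a * p) ^ 2) p := by
    intro p hp0
    have hne := (hden p hp0).ne'
    have h1 : HasDerivAt (fun q : ℝ => k * a / (1 + a * q))
        ((0 * (1 + a * p) - k * a * a) / (1 + a * p) ^ 2) p :=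
      (hasDerivAt_const p (k * a)).div (hlin p) hne
    have hd : HasDerivAt (fun q : ℝ => P_C + q) 1 p := by
      simpa using (hasDerivAt_id p).const_add P_C
    have h2 := h1.mul hd
    have h3 := h2.sub (hrd p hp0)
    have : F = fun q : ℝ => k * a / (1 + a * q) * (P_C + q) - r q := rfl
    rw [this]
    refine h3.congr_deriv ?_
    field_simp
    ring
  have hFanti : StrictAntiOn F (Set.Ici 0) := by
    apply strictAntiOn_of_deriv_neg (convex_Ici 0)
    · intro p hp0
      exact (hFd p hp0).continuousAt.continuousWithinAt
    · intro p hp0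
      rw [interior_Ici] at hp0
      have hp0' : (0:ℝ) ≤ p := le_of_lt hp0
      rw [(hFd p hp0').deriv]
      apply div_neg_of_neg_of_pos
      · have : 0 < k * a ^ 2 * (P_C + p) := by positivity
        linarith
      · positivity
  have hFpos : ∀ p : ℝ, 0 ≤ p → p < pstar → 0 < F p := by
    intro p h0 hlt
    have := hFanti (Set.mem_Ici.mpr h0) (Set.mem_Ici.mpr hp.le) hlt
    rwa [hFstar] at this
  have hFneg : ∀ p : ℝ, pstar < p → F p < 0 := by
    intro p hlt
    have := hFanti (Set.mem_Ici.mpr hp.le) (Set.mem_Ici.mpr (le_of_lt (hp.trans hlt))) hlt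
    rwa [hFstar] at this
  have hMono : StrictMonoOn U (Set.Icc 0 pstar) := by
    apply strictMonoOn_of_deriv_pos (convex_Icc 0 pstar)
    · intro p hp0
      exact (hUd p hp0.1).continuousAt.continuousWithinAt
    · intro p hp0
      rw [interior_Icc] at hp0
      rw [(hUd p hp0.1.le).deriv]
      exact div_pos (hFpos p hp0.1.le hp0.2) (pow_pos (hdenP p hp0.1.le) 2)
  have hAnti : StrictAntiOn U (Set.Ici pstar) := by
    apply strictAntiOn_of_deriv_neg (convex_Ici pstar)
    · intro p hp0
      exact (hUd p (hp.le.trans hp0)).continuousAt.continuousWithinAt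
    · intro p hp0
      rw [interior_Ici] at hp0
      rw [(hUd p (hp.trans hp0).le).deriv]
      exact div_neg_of_neg_of_pos (hFneg p hp0) (pow_pos (hdenP p (hp.trans hp0).le) 2)
  refine ⟨hMono, hAnti, ?_⟩
  intro p hp0 hne
  rcases lt_or_gt_of_ne hne with h | h
  · exact hMono ⟨Set.mem_Ici.mp hp0, h.le⟩ ⟨hp.le, le_refl _⟩ h
  · exact hAnti (Set.mem_Ici.mpr le_rfl) (Set.mem_Ici.mpr h.le) h
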